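/- Let R be a T-region of a finite simple graph G, and let C be a cycle of G that contains all three simplicial vertices of R and at least one vertex of G not in R. Then the set of vertices of C lying in R, together with the edges of C having both endpoints in R, forms a path; this path contains all three outer vertices of R, and both of its endpoints are outer vertices of R. -/

import Mathlib

/-- The graph `T` on nine vertices: `0,1,2` are the outer vertices `o₁,o₂,o₃`,
`3,4,5` are `g₁,g₂,g₃` and `6,7,8` are the simplicial vertices `w₁,w₂,w₃`. -/
def TGraph : SimpleGraph (Fin 9) :=
  SimpleGraph.fromRel fun a b =>
    (a, b) ∈ ([(0,1),(0,2),(1,2),(3,4),(3,5),(4,5),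
      (3,0),(3,1),(4,1),(4,2),(5,2),(5,0),
      (6,0),(6,1),(6,3),(7,1),(7,2),(7,4),
      (8,2),(8,0),(8,5)] : List (Fin 9 × Fin 9))

open List

namespace TReg

variable {V : Type*} {G : SimpleGraph V}




/-- Build a walk from a nonempty list whose consecutive elements are adjacent. -/
def fromChain : (l : List V) → List.Chain' G.Adj l → (h : l ≠ []) → G.Walk (l.head h) (l.getLast h)
  | [], _, h => absurd rfl h
  | [_], _, _ => SimpleGraph.Walk.nil
  | x :: y :: t, hc, _ =>
    SimpleGraph.Walk.cons (List.isChain_cons_cons.1 hc).1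
      ((fromChain (y :: t) (List.isChain_cons_cons.1 hc).2 (by simp)).copy rfl
        (List.getLast_cons (by simp)).symm)

theorem support_fromChain : ∀ (l : List V) (hc : List.Chain' G.Adj l) (h : l ≠ []),
    (fromChain l hc h).support = l
  | [], _, h => absurd rfl h
  | [x], _, _ => rfl
  | x :: y :: t, hc, h => by
    rw [fromChain]
    simp only [SimpleGraph.Walk.support_cons, SimpleGraph.Walk.support_copy, List.head_cons]
    exact congrArg (x :: ·) ((SimpleGraph.Walk.support_copy _ _ _).trans (support_fromChain (y :: t) _ _))

/-- The list of edges between consecutive entries of a list. -/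
def pairs (l : List V) : List (Sym2 V) := List.zipWith (fun x y => s(x, y)) l l.tail

theorem pairs_cons_cons (x y : V) (t : List V) :
    pairs (x :: y :: t) = s(x, y) :: pairs (y :: t) := rfl

theorem mem_pairs : ∀ (l : List V) (e : Sym2 V),
    e ∈ pairs l ↔ ∃ x y, [x, y] <:+: l ∧ e = s(x, y)
  | [], e => by
    constructor
    · intro h; simp [pairs] at h
    · rintro ⟨x, y, ⟨s, t, hst⟩, -⟩; simp at hst
  | [a], e => by
    constructor
    · intro h; simp [pairs] at h
    · rintro ⟨x, y, ⟨s, t, hst⟩, -⟩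
      rcases s with _ | ⟨c, s⟩ <;> simp at hst
  | a :: b :: tl, e => by
    rw [pairs_cons_cons, List.mem_cons, mem_pairs (b :: tl) e]
    constructor
    · rintro (rfl | ⟨x, y, hinf, rfl⟩)
      · exact ⟨a, b, ⟨[], tl, rfl⟩, rfl⟩
      · exact ⟨x, y, hinf.trans (List.infix_cons (List.infix_refl _)), rfl⟩
    · rintro ⟨x, y, ⟨s, t, hst⟩, rfl⟩
      rcases s with _ | ⟨c, s⟩
      · simp only [List.nil_append, List.cons_append, List.cons.injEq] at hst
        obtain ⟨rfl, rfl, -⟩ := hst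
        exact Or.inl rfl
      · simp only [List.cons_append, List.cons.injEq] at hst
        exact Or.inr ⟨x, y, ⟨s, t, hst.2⟩, rfl⟩

theorem edges_eq_pairs {u v : V} (p : G.Walk u v) : p.edges = pairs p.support := by
  induction p with
  | nil => rfl
  | cons h p ih =>
    rename_i c
    rw [SimpleGraph.Walk.edges_cons, SimpleGraph.Walk.support_cons, p.support_eq_cons,
      pairs_cons_cons, ← p.support_eq_cons, ih]

/-- Uniqueness of splitting at an element occurring once. -/
theorem cons_eq_of {α : Type*} : ∀ (p p' s s' : List α) (x : α),
    p ++ x :: s = p' ++ x :: s' → x ∉ p' → x ∉ s' → p = p' ∧ s = s'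
  | p, [], s, s', x, h, hp', hs' => by
    rcases p with _ | ⟨c, p⟩
    · simpa using h
    · simp only [List.cons_append, List.nil_append, List.cons.injEq] at h
      obtain ⟨rfl, h⟩ := h
      exact absurd (h ▸ List.mem_append_right p (List.mem_cons_self)) hs'
  | p, c' :: p', s, s', x, h, hp', hs' => by
    rcases p with _ | ⟨c, p⟩
    · simp only [List.nil_append, List.cons_append, List.cons.injEq] at h
      exact absurd (h.1 ▸ List.mem_cons_self) hp'
    · simp only [List.cons_append, List.cons.injEq] at h
      obtain ⟨rfl, h⟩ := h
      obtain ⟨rfl, rfl⟩ := cons_eq_of p p' s s' x h (fun hx => hp' (List.mem_cons_of_mem _ hx)) hs'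
      exact ⟨rfl, rfl⟩

theorem eq_singleton_of_head_eq_getLast {α : Type*} {l : List α} (hnd : l.Nodup) (h : l ≠ [])
    (he : l.head h = l.getLast h) : l = [l.head h] := by
  rcases l with _ | ⟨a, tl⟩
  · exact absurd rfl h
  rcases tl with _ | ⟨b, tl⟩
  · rfl
  · exfalso
    rw [List.head_cons, List.getLast_cons (by simp)] at he
    exact (List.nodup_cons.1 hnd).1 (he ▸ List.getLast_mem _)


/-- Extract the maximal run of `q`-elements around an occurrence of `x`. -/
theorem extract {α : Type*} (q : α → Bool) (mm : List α) (x : α) (hx : x ∈ mm) (hq : q x) :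
    ∃ m₁ r m₂, mm = m₁ ++ r ++ m₂ ∧ x ∈ r ∧ (∀ y ∈ r, q y) ∧
      (∀ h : m₁ ≠ [], ¬ q (m₁.getLast h)) ∧ (∀ h : m₂ ≠ [], ¬ q (m₂.head h)) := by
  obtain ⟨s, t, rfl⟩ := List.append_of_mem hx
  have h1 : (List.dropWhile q s.reverse).reverse ++ (List.takeWhile q s.reverse).reverse = s := by
    rw [← List.reverse_append, List.takeWhile_append_dropWhile, List.reverse_reverse]
  have h2 : List.takeWhile q t ++ List.dropWhile q t = t := List.takeWhile_append_dropWhile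
  refine ⟨(s.reverse.dropWhile q).reverse,
    (s.reverse.takeWhile q).reverse ++ x :: t.takeWhile q, t.dropWhile q, ?_, ?_, ?_, ?_, ?_⟩
  · conv_lhs => rw [← h1, ← h2]
    simp [List.append_assoc]
  · simp
  · intro y hy
    rcases List.mem_append.1 hy with hy | hy
    · exact List.mem_takeWhile_imp (List.mem_reverse.1 hy)
    · rcases List.mem_cons.1 hy with rfl | hy
      · exact hq
      · exact List.mem_takeWhile_imp hy
  · intro h
    rw [List.getLast_reverse]
    simpa using List.head_dropWhile_not q _
  · intro h
    simpa using List.head_dropWhile_not q _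




theorem wstep {V : Type*} {G : SimpleGraph V} (φ : Fin 9 → V) (hinj : Function.Injective φ)
    (hind : ∀ i j, G.Adj (φ i) (φ j) ↔ TGraph.Adj i j)
    {r : List V} (hnd : r.Nodup) (hch : List.Chain' G.Adj r)
    (hA : ∀ y ∈ r, y ∈ Set.range φ)
    {a b c : Fin 9} (ha : a.1 < 3) (hb : b.1 < 3) (hc : c.1 < 3)
    (hab : a ≠ b) (hca : c ≠ a) (hcb : c ≠ b)
    (hner : r ≠ []) (hH : r.head hner = φ a) (hL : r.getLast hner = φ b)
    (hcr : φ c ∉ r)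
    {wi o1 o2 gi : Fin 9} (hwi : 6 ≤ wi.1)
    (hN : ∀ j : Fin 9, TGraph.Adj wi j → j = o1 ∨ j = o2 ∨ j = gi)
    (ho1 : o1.1 < 3) (ho2 : o2.1 < 3) (hgi : 3 ≤ gi.1)
    (hw : φ wi ∈ r) :
    (∃ t, r = φ a :: φ wi :: t) ∨ (∃ t, r = t ++ [φ wi, φ b]) := by
  obtain ⟨r₁, r₂, hr⟩ := List.append_of_mem hw
  subst hr
  have hr₁ : r₁ ≠ [] := by
    rintro rfl
    simp only [List.nil_append, List.head_cons] at hH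
    have h := hinj hH
    subst h; omega
  have hr₂ : r₂ ≠ [] := by
    rintro rfl
    rw [List.getLast_append_of_ne_nil _ (by simp), List.getLast_singleton] at hL
    have h := hinj hL
    subst h; omega
  obtain ⟨n, r₂', rfl⟩ : ∃ n r₂', r₂ = n :: r₂' := by
    rcases r₂ with _ | ⟨n, r₂'⟩
    · exact absurd rfl hr₂
    · exact ⟨n, r₂', rfl⟩
  clear hr₂
  set p := r₁.getLast hr₁ with hpdef
  have hpm : p ∈ r₁ := List.getLast_mem hr₁
  have hd := List.disjoint_of_nodup_append hnd
  have hchsplit := List.isChain_append.1 hch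
  have hadjp : G.Adj p (φ wi) := by
    refine hchsplit.2.2 p ?_ (φ wi) rfl
    rw [List.getLast?_eq_getLast hr₁]; rfl
  have hadjn : G.Adj (φ wi) n := (List.isChain_cons_cons.1 hchsplit.2.1).1
  obtain ⟨jp, hjp⟩ := hA p (List.mem_append_left _ hpm)
  obtain ⟨jn, hjn⟩ := hA n (List.mem_append_right _ (by simp))
  have hTp : TGraph.Adj wi jp := by
    rw [← hjp] at hadjp
    exact ((hind jp wi).1 hadjp).symm
  have hTn : TGraph.Adj wi jn := by
    rw [← hjn] at hadjn
    exact (hind wi jn).1 hadjn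
  have hpn : p ≠ n := by
    intro h
    exact hd hpm (by rw [h]; simp)
  have hjpn : jp ≠ jn := fun h => hpn (by rw [← hjp, ← hjn, h])
  have hab' : a.1 ≠ b.1 := fun h => hab (Fin.ext h)
  have hca' : c.1 ≠ a.1 := fun h => hca (Fin.ext h)
  have hcb' : c.1 ≠ b.1 := fun h => hcb (Fin.ext h)
  have hheadr : (r₁ ++ φ wi :: n :: r₂').head (by simp [hr₁]) = r₁.head hr₁ :=
    List.head_append_left hr₁
  have hlastr : (r₁ ++ φ wi :: n :: r₂').getLast (by simp) = (n :: r₂').getLast (by simp) := by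
    rw [List.getLast_append_of_ne_nil _ (by simp), List.getLast_cons (by simp)]
  have hcasep : jp.1 < 3 → ∃ t, r₁ ++ φ wi :: n :: r₂' = φ a :: φ wi :: t := by
    intro hjp3
    have : jp = a ∨ jp = b ∨ jp = c := by
      have h1 : jp.1 = a.1 ∨ jp.1 = b.1 ∨ jp.1 = c.1 := by omega
      rcases h1 with h1 | h1 | h1
      exacts [Or.inl (Fin.ext h1), Or.inr (Or.inl (Fin.ext h1)), Or.inr (Or.inr (Fin.ext h1))]
    rcases this with rfl | rfl | rfl
    · -- p = φ jp = φ a = head r = head r₁ : r₁ is a singleton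
      have hh : r₁.head hr₁ = p := by rw [← hheadr, hH, hjp]
      have hsing := eq_singleton_of_head_eq_getLast
        ((List.nodup_append.1 hnd).1) hr₁ (hh.trans hpdef)
      rw [hh] at hsing
      refine ⟨n :: r₂', ?_⟩
      rw [hsing, hjp]
      rfl
    · -- p = φ b = getLast r ∈ n :: r₂' : contradiction with disjointness
      exfalso
      have : p = (n :: r₂').getLast (by simp) := by rw [← hjp, ← hL, hlastr]
      exact hd hpm (by rw [this]; exact List.mem_cons_of_mem _ (List.getLast_mem _))
    · exact absurd (by rw [hjp]; exact List.mem_append_left _ hpm) hcr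
  have hcasen : jn.1 < 3 → ∃ t, r₁ ++ φ wi :: n :: r₂' = t ++ [φ wi, φ b] := by
    intro hjn3
    have : jn = a ∨ jn = b ∨ jn = c := by
      have h1 : jn.1 = a.1 ∨ jn.1 = b.1 ∨ jn.1 = c.1 := by omega
      rcases h1 with h1 | h1 | h1
      exacts [Or.inl (Fin.ext h1), Or.inr (Or.inl (Fin.ext h1)), Or.inr (Or.inr (Fin.ext h1))]
    rcases this with rfl | rfl | rfl
    · -- n = φ a = head r₁ ∈ r₁ : contradiction
      exfalso
      have : n = r₁.head hr₁ := by rw [← hjn, ← hH, hheadr]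
      exact hd (this ▸ List.head_mem hr₁) (by simp)
    · -- n = φ b = getLast (n :: r₂') : n :: r₂' is a singleton, so r₂' = []
      have hgl : (n :: r₂').getLast (by simp) = n := by
        rw [← hlastr, hL, hjn]
      have hh : (n :: r₂').head (by simp) = (n :: r₂').getLast (by simp) := by
        rw [List.head_cons, hgl]
      have hnd₂ : (n :: r₂').Nodup := by
        have := (List.nodup_append.1 hnd).2.1
        exact (List.nodup_cons.1 this).2
      have hsing := eq_singleton_of_head_eq_getLast hnd₂ (by simp) hh
      rw [List.head_cons] at hsing
      refine ⟨r₁, ?_⟩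
      rw [hsing, ← hjn]
    · exact absurd (by rw [hjn]; exact List.mem_append_right _ (by simp)) hcr
  rcases hN jp hTp with h1 | h1 | h1
  · exact Or.inl (hcasep (by rw [h1]; exact ho1))
  · exact Or.inl (hcasep (by rw [h1]; exact ho2))
  · rcases hN jn hTn with h2 | h2 | h2
    · exact Or.inr (hcasen (by rw [h2]; exact ho1))
    · exact Or.inr (hcasen (by rw [h2]; exact ho2))
    · exact absurd (h1.trans h2.symm) hjpn

theorem PH {V : Type*} {G : SimpleGraph V} (φ : Fin 9 → V) (hinj : Function.Injective φ)
    (hind : ∀ i j, G.Adj (φ i) (φ j) ↔ TGraph.Adj i j)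
    {r : List V} (hnd : r.Nodup) (hch : List.Chain' G.Adj r)
    (hA : ∀ y ∈ r, y ∈ Set.range φ)
    {a b c : Fin 9} (ha : a.1 < 3) (hb : b.1 < 3) (hc : c.1 < 3)
    (hab : a ≠ b) (hca : c ≠ a) (hcb : c ≠ b)
    (hner : r ≠ []) (hH : r.head hner = φ a) (hL : r.getLast hner = φ b)
    (hcr : φ c ∉ r)
    (hw6 : φ 6 ∈ r) (hw7 : φ 7 ∈ r) (hw8 : φ 8 ∈ r) : False := by
  have hN6 : ∀ j : Fin 9, TGraph.Adj 6 j → j = 0 ∨ j = 1 ∨ j = 3 := by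
    simp only [TGraph, SimpleGraph.fromRel_adj]; decide
  have hN7 : ∀ j : Fin 9, TGraph.Adj 7 j → j = 1 ∨ j = 2 ∨ j = 4 := by
    simp only [TGraph, SimpleGraph.fromRel_adj]; decide
  have hN8 : ∀ j : Fin 9, TGraph.Adj 8 j → j = 0 ∨ j = 2 ∨ j = 5 := by
    simp only [TGraph, SimpleGraph.fromRel_adj]; decide
  have Q6 := wstep φ hinj hind hnd hch hA ha hb hc hab hca hcb hner hH hL hcr
    (by decide) hN6 (by decide) (by decide) (by decide) hw6
  have Q7 := wstep φ hinj hind hnd hch hA ha hb hc hab hca hcb hner hH hL hcr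
    (by decide) hN7 (by decide) (by decide) (by decide) hw7
  have Q8 := wstep φ hinj hind hnd hch hA ha hb hc hab hca hcb hner hH hL hcr
    (by decide) hN8 (by decide) (by decide) (by decide) hw8
  have hLft : ∀ {w w' : V}, (∃ t, r = φ a :: w :: t) → (∃ t, r = φ a :: w' :: t) → w = w' := by
    rintro w w' ⟨t1, h1⟩ ⟨t2, h2⟩
    rw [h1] at h2
    simp only [List.cons.injEq] at h2
    exact h2.2.1
  have hRt : ∀ {w w' : V}, (∃ t, r = t ++ [w, φ b]) → (∃ t, r = t ++ [w', φ b]) → w = w' := by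
    rintro w w' ⟨t1, h1⟩ ⟨t2, h2⟩
    rw [h1] at h2
    have h3 := (List.append_inj' h2 rfl).2
    simp only [List.cons.injEq] at h3
    exact h3.1
  have ne67 : φ (6 : Fin 9) ≠ φ 7 := fun h => absurd (hinj h) (by decide)
  have ne68 : φ (6 : Fin 9) ≠ φ 8 := fun h => absurd (hinj h) (by decide)
  have ne78 : φ (7 : Fin 9) ≠ φ 8 := fun h => absurd (hinj h) (by decide)
  rcases Q6 with q6 | q6 <;> rcases Q7 with q7 | q7
  · exact ne67 (hLft q6 q7)
  · rcases Q8 with q8 | q8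
    · exact ne68 (hLft q6 q8)
    · exact ne78 (hRt q7 q8)
  · rcases Q8 with q8 | q8
    · exact ne78 (hLft q7 q8)
    · exact ne68 (hRt q6 q8)
  · exact ne67 (hRt q6 q7)


theorem runEnds {V : Type*} {G : SimpleGraph V} (φ : Fin 9 → V)
    (hclosed : ∀ i : Fin 9, 3 ≤ i.1 → ∀ v, G.Adj (φ i) v → v ∈ Set.range φ)
    {z : V} (hz : z ∉ Set.range φ) {l m u₁ r u₂ : List V}
    (hl : l = z :: m ++ [z]) (hm : m = u₁ ++ r ++ u₂)
    (hch : List.Chain' G.Adj l)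
    (hrne : r ≠ []) (hrA : ∀ y ∈ r, y ∈ Set.range φ)
    (hbl : ∀ h : u₁ ≠ [], u₁.getLast h ∉ Set.range φ)
    (hbr : ∀ h : u₂ ≠ [], u₂.head h ∉ Set.range φ) :
    ∃ a b : Fin 9, a.1 < 3 ∧ b.1 < 3 ∧ r.head hrne = φ a ∧ r.getLast hrne = φ b := by
  obtain ⟨r0, rt, rfl⟩ : ∃ r0 rt, r = r0 :: rt := by
    rcases r with _ | ⟨r0, rt⟩
    · exact absurd rfl hrne
    · exact ⟨r0, rt, rfl⟩
  have hl2 : l = (z :: u₁) ++ ((r0 :: rt) ++ (u₂ ++ [z])) := by rw [hl, hm]; simp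
  rw [hl2] at hch
  obtain ⟨hch1, hch2, hjun⟩ := List.isChain_append.1 hch
  have hadjL : G.Adj ((z :: u₁).getLast (by simp)) r0 := by
    refine hjun _ ?_ r0 rfl
    rw [List.getLast?_eq_getLast (by simp)]; rfl
  have hnL : (z :: u₁).getLast (by simp) ∉ Set.range φ := by
    rcases u₁ with _ | ⟨x, u⟩
    · simpa using hz
    · rw [List.getLast_cons (by simp)]
      exact hbl (by simp)
  obtain ⟨hch3, hch4, hjun2⟩ := List.isChain_append.1 hch2
  have hadjR : G.Adj ((r0 :: rt).getLast (by simp)) ((u₂ ++ [z]).head (by simp)) := by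
    refine hjun2 _ ?_ _ ?_
    · rw [List.getLast?_eq_getLast (by simp)]; rfl
    · rw [List.head?_eq_head (by simp)]; rfl
  have hnR : (u₂ ++ [z]).head (by simp) ∉ Set.range φ := by
    rcases u₂ with _ | ⟨x, u⟩
    · simpa using hz
    · simpa using hbr (by simp)
  obtain ⟨a, hae⟩ := hrA r0 (List.mem_cons_self)
  obtain ⟨b, hbe⟩ := hrA ((r0 :: rt).getLast (by simp)) (List.getLast_mem _)
  refine ⟨a, b, ?_, ?_, hae.symm, hbe.symm⟩
  · by_contra h
    rw [← hae] at hadjL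
    exact hnL (hclosed a (by omega) _ hadjL.symm)
  · by_contra h
    rw [← hbe] at hadjR
    exact hnR (hclosed b (by omega) _ hadjR)



theorem pair_infix {V : Type*} (φ : Fin 9 → V) {z x y : V} {l m m₁ r m₂ : List V}
    (hl : l = z :: m ++ [z]) (hm : m = m₁ ++ r ++ m₂)
    (hnd : (z :: m).Nodup)
    (hzA : z ∉ Set.range φ)
    (h₁A : ∀ v ∈ m₁, v ∉ Set.range φ) (h₂A : ∀ v ∈ m₂, v ∉ Set.range φ)
    (hxy : [x, y] <:+: l) (hx : x ∈ Set.range φ) (hy : y ∈ Set.range φ) :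
    [x, y] <:+: r := by
  obtain ⟨pp, ss, hps⟩ := hxy
  have hxz : x ≠ z := fun h => hzA (h ▸ hx)
  have hyz : y ≠ z := fun h => hzA (h ▸ hy)
  have hndm : m.Nodup := (List.nodup_cons.1 hnd).2
  have hxl : x ∈ l := by rw [← hps]; simp
  have hxm : x ∈ m := by
    rw [hl] at hxl
    rcases List.mem_cons.1 hxl with h | h
    · exact absurd h hxz
    · rcases List.mem_append.1 h with h | h
      · exact h
      · simp at h; exact absurd h hxz
  have hxr : x ∈ r := by
    rw [hm] at hxm
    rcases List.mem_append.1 hxm with h | h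
    · rcases List.mem_append.1 h with h | h
      · exact absurd hx (h₁A x h)
      · exact h
    · exact absurd hx (h₂A x h)
  obtain ⟨r₁, r₂, hrr⟩ := List.append_of_mem hxr
  have hsubr : r <+ m := List.IsInfix.sublist ⟨m₁, m₂, hm.symm⟩
  have hndr : r.Nodup := hsubr.nodup hndm
  rw [hrr] at hndr
  have hxr₁ : x ∉ r₁ := fun h =>
    (List.disjoint_of_nodup_append hndr) h (List.mem_cons_self)
  have hxr₂ : x ∉ r₂ := (List.nodup_cons.1 (List.nodup_append.1 hndr).2.1).1
  have h2 : (z :: m₁ ++ r₁) ++ x :: (r₂ ++ m₂ ++ [z]) = l := by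
    rw [hl, hm, hrr]; simp
  have h3 : pp ++ x :: (y :: ss) = l := by rw [← hps]; simp
  have hxn1 : x ∉ z :: m₁ ++ r₁ := by
    intro h
    rcases List.mem_cons.1 h with h | h
    · exact hxz h
    · rcases List.mem_append.1 h with h | h
      · exact h₁A x h hx
      · exact hxr₁ h
  have hxn2 : x ∉ r₂ ++ m₂ ++ [z] := by
    intro h
    rcases List.mem_append.1 h with h | h
    · rcases List.mem_append.1 h with h | h
      · exact hxr₂ h
      · exact h₂A x h hx
    · simp at h; exact hxz h
  obtain ⟨-, h4⟩ := cons_eq_of pp (z :: m₁ ++ r₁) (y :: ss) (r₂ ++ m₂ ++ [z]) x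
    (h3.trans h2.symm) hxn1 hxn2
  rcases r₂ with _ | ⟨y', r₂'⟩
  · exfalso
    simp only [List.nil_append] at h4
    rcases m₂ with _ | ⟨w, m₂'⟩
    · simp only [List.nil_append, List.cons.injEq] at h4
      exact hyz h4.1
    · simp only [List.cons_append, List.cons.injEq] at h4
      exact h₂A _ (h4.1 ▸ List.mem_cons_self) hy
  · simp only [List.cons_append, List.cons.injEq] at h4
    exact ⟨r₁, r₂', by rw [hrr, ← h4.1]; simp⟩

theorem head_eq_of_eq {α : Type*} {l l' : List α} (h : l = l') (h1 : l ≠ []) (h2 : l' ≠ []) :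
    l.head h1 = l'.head h2 := by subst h; rfl

theorem getLast_eq_of_eq {α : Type*} {l l' : List α} (h : l = l') (h1 : l ≠ []) (h2 : l' ≠ []) :
    l.getLast h1 = l'.getLast h2 := by subst h; rfl

theorem mem_support_iff_mem_tail {V : Type*} {G : SimpleGraph V} {w : V} (p : G.Walk w w)
    (hne : p.support.tail ≠ []) (v : V) : v ∈ p.support ↔ v ∈ p.support.tail := by
  constructor
  · intro hv
    obtain ⟨b, tl', htl⟩ : ∃ b tl', p.support.tail = b :: tl' := by
      rcases h : p.support.tail with _ | ⟨b, tl'⟩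
      · exact absurd h hne
      · exact ⟨_, _, rfl⟩
    have hsupp : p.support = w :: b :: tl' := by rw [p.support_eq_cons, htl]
    have h1 : p.support.getLast? = some w := by
      rw [List.getLast?_eq_getLast (by simp)]
      exact congrArg some p.getLast_support
    rw [hsupp, List.getLast?_cons_cons, List.getLast?_eq_getLast (by simp)] at h1
    have h2 := Option.some.inj h1
    rw [hsupp] at hv
    rcases List.mem_cons.1 hv with rfl | hv2
    · rw [htl, ← h2]
      exact List.getLast_mem _
    · rwa [htl]
  · exact fun hv => List.mem_of_mem_tail hv


end TReg
open TReg

/-- If `R` is a `T`-region of `G` (given by the embedding `φ` of `T` into `G`,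
inducing `R`, with no inner vertex adjacent to a vertex outside `R`) and `C`
is a cycle containing all three simplicial vertices of `R` and a vertex of
`G − R`, then the subgraph of `C` induced by the vertices of `R` is a path
containing all three outer vertices of `R`, two of them as its ends. -/
theorem cycle_through_T_region
    {V : Type*} [Fintype V] (G : SimpleGraph V) (φ : Fin 9 → V)
    (hinj : Function.Injective φ)
    (hind : ∀ i j, G.Adj (φ i) (φ j) ↔ TGraph.Adj i j)
    (hclosed : ∀ i : Fin 9, 3 ≤ i.1 → ∀ v, G.Adj (φ i) v → v ∈ Set.range φ)
    (u : V) (C : G.Walk u u) (hC : C.IsCycle)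
    (hsimp : ∀ i : Fin 9, 6 ≤ i.1 → φ i ∈ C.support)
    (hout : ∃ z ∈ C.support, z ∉ Set.range φ) :
    ∃ s t : Fin 9, s.1 < 3 ∧ t.1 < 3 ∧ s ≠ t ∧
      ∃ P : G.Walk (φ s) (φ t), P.IsPath ∧
        (∀ v, v ∈ P.support ↔ v ∈ C.support ∧ v ∈ Set.range φ) ∧
        (∀ e, e ∈ P.edges ↔ e ∈ C.edges ∧ ∀ v ∈ e, v ∈ Set.range φ) ∧
        (∀ i : Fin 9, i.1 < 3 → φ i ∈ P.support) := by
  classical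
  obtain ⟨z, hzC, hzA⟩ := hout
  set q : V → Bool := fun v => decide (v ∈ Set.range φ) with hqdef
  have hq : ∀ v, q v = true ↔ v ∈ Set.range φ := fun v => by simp [hqdef]
  set C' := C.rotate z hzC with hC'def
  have hC' : C'.IsCycle := hC.rotate hzC
  -- the support of C' is z :: m ++ [z]
  have htlne : C'.support.tail ≠ [] := by
    have h3 := hC'.three_le_length
    intro h0
    have hsl := C'.length_support
    rw [C'.support_eq_cons, h0] at hsl
    simp only [List.length_cons, List.length_nil] at hsl
    omega
  obtain ⟨bb, tl', htl⟩ : ∃ bb tl', C'.support.tail = bb :: tl' := by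
    rcases h : C'.support.tail with _ | ⟨bb, tl'⟩
    · exact absurd h htlne
    · exact ⟨_, _, rfl⟩
  have hsupp : C'.support = z :: bb :: tl' := by rw [C'.support_eq_cons, htl]
  have h1 : C'.support.getLast? = some z := by
    rw [List.getLast?_eq_getLast (by simp)]
    exact congrArg some C'.getLast_support
  rw [hsupp, List.getLast?_cons_cons, List.getLast?_eq_getLast (by simp)] at h1
  have hglz : (bb :: tl').getLast (by simp) = z := Option.some.inj h1
  set m : List V := (bb :: tl').dropLast with hmdef
  have hbtl : m ++ [z] = bb :: tl' := by
    rw [hmdef, ← hglz]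
    exact List.dropLast_append_getLast (by simp)
  have hl : C'.support = z :: m ++ [z] := by
    rw [hsupp, ← hbtl]
    exact List.cons_append.symm
  have hndtl : (bb :: tl').Nodup := by
    have := hC'.support_nodup
    rwa [htl] at this
  have hndzm : (z :: m).Nodup := by
    rw [← hbtl] at hndtl
    obtain ⟨h1', h2', h3'⟩ := List.nodup_append.1 hndtl
    exact List.nodup_cons.2 ⟨fun hzm => h3' z hzm z (by simp) rfl, h1'⟩
  have hndm : m.Nodup := (List.nodup_cons.1 hndzm).2
  have hzm : z ∉ m := (List.nodup_cons.1 hndzm).1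
  -- membership and edges transfer
  have htailC : C.support.tail ≠ [] := by
    have h3 := hC.three_le_length
    intro h0
    have hsl := C.length_support
    rw [C.support_eq_cons, h0] at hsl
    simp only [List.length_cons, List.length_nil] at hsl
    omega
  have hmemC : ∀ v, v ∈ C.support ↔ v ∈ C'.support := by
    intro v
    rw [mem_support_iff_mem_tail C htailC v, mem_support_iff_mem_tail C' htlne v]
    exact ((SimpleGraph.Walk.support_rotate C z hzC).mem_iff).symm
  have hedges : ∀ e, e ∈ C.edges ↔ e ∈ C'.edges :=
    fun e => ((SimpleGraph.Walk.rotate_edges C z hzC).mem_iff).symm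
  have hchl : List.Chain' G.Adj C'.support := C'.isChain_adj_support
  have hms : ∀ v, v ∈ Set.range φ → (v ∈ C.support ↔ v ∈ m) := by
    intro v hv
    have hvz : v ≠ z := fun h => hzA (h ▸ hv)
    rw [hmemC v, hl]
    constructor
    · intro h
      rcases List.mem_cons.1 h with h | h
      · exact absurd h hvz
      · rcases List.mem_append.1 h with h | h
        · exact h
        · simp at h; exact absurd h hvz
    · intro h
      exact List.mem_cons_of_mem _ (List.mem_append_left _ h)
  have hwm : ∀ i : Fin 9, 6 ≤ i.1 → φ i ∈ m :=
    fun i hi => (hms _ ⟨i, rfl⟩).1 (hsimp i hi)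
  -- extract the run containing w₁ = φ 6
  obtain ⟨m₁, r, m₂, hsplit, hw6r, hrq, hbL, hbR⟩ :=
    extract q m (φ 6) (hwm 6 (by decide)) ((hq _).2 ⟨6, rfl⟩)
  have hrA : ∀ y ∈ r, y ∈ Set.range φ := fun y hy => (hq y).1 (hrq y hy)
  have hbL' : ∀ h : m₁ ≠ [], m₁.getLast h ∉ Set.range φ :=
    fun h hin => hbL h ((hq _).2 hin)
  have hbR' : ∀ h : m₂ ≠ [], m₂.head h ∉ Set.range φ :=
    fun h hin => hbR h ((hq _).2 hin)
  have hrne : r ≠ [] := List.ne_nil_of_mem hw6r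
  have hrm : r <+ m := List.IsInfix.sublist ⟨m₁, m₂, hsplit.symm⟩
  have hndr : r.Nodup := hrm.nodup hndm
  have hrl : r <:+: C'.support :=
    List.IsInfix.trans ⟨m₁, m₂, hsplit.symm⟩ ⟨[z], [z], by rw [hl]; simp⟩
  have hchr : List.Chain' G.Adj r := hchl.infix hrl
  obtain ⟨a, b, ha, hb, hH, hL⟩ :=
    runEnds φ hclosed hzA hl hsplit hchl hrne hrA hbL' hbR'
  -- a run whose head or last is outer cannot both start and end there if it contains a wᵢ
  have hsingNe : ∀ (rr : List V) (hne : rr ≠ []) (hnd : rr.Nodup) (i j : Fin 9), 6 ≤ i.1 →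
      j.1 < 3 → φ i ∈ rr → rr.head hne = φ j → rr.getLast hne ≠ φ j := by
    intro rr hne hnd i j hi hj hir hHead hLast
    have hsing := eq_singleton_of_head_eq_getLast hnd hne (by rw [hHead, ← hLast])
    rw [hsing, hHead] at hir
    have h5 := hinj (List.mem_singleton.1 hir)
    have h6 : i.1 = j.1 := congrArg Fin.val h5
    omega
  have hab : a ≠ b := by
    intro h
    exact hsingNe r hrne hndr 6 a (by decide) ha hw6r hH (by rw [hL, h])
  have ka : φ a ∈ r := by rw [← hH]; exact List.head_mem hrne
  have kb : φ b ∈ r := by rw [← hL]; exact List.getLast_mem hrne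
  have hndm' : ((m₁ ++ r) ++ m₂).Nodup := by rwa [hsplit] at hndm
  have hndm₁r : (m₁ ++ r).Nodup := (List.nodup_append.1 hndm').1
  have hdisj : List.Disjoint m₁ r := List.disjoint_of_nodup_append hndm₁r
  have hdisj2 : List.Disjoint (m₁ ++ r) m₂ := List.disjoint_of_nodup_append hndm'
  have hndm₁ : m₁.Nodup := (List.nodup_append.1 hndm₁r).1
  have hndm₂ : m₂.Nodup := (List.nodup_append.1 hndm').2.1
  -- analysis of a run inside m₁
  have keyM₁ : ∀ x, x ∈ m₁ → x ∈ Set.range φ →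
      ∃ (r' : List V) (hne' : r' ≠ []), r'.Nodup ∧ (∀ y ∈ r', y ∈ Set.range φ) ∧
        (∀ y ∈ r', y ∈ m₁) ∧ x ∈ r' ∧
        ∃ a' b' : Fin 9, a'.1 < 3 ∧ b'.1 < 3 ∧ r'.head hne' = φ a' ∧ r'.getLast hne' = φ b' := by
    intro x hx hxA
    obtain ⟨c₀, r', c₁, hin, hir', hr'q, hbL2, hbR2⟩ := extract q m₁ x hx ((hq _).2 hxA)
    have hm₁ne : m₁ ≠ [] := List.ne_nil_of_mem hx
    have hr'ne : r' ≠ [] := List.ne_nil_of_mem hir'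
    have hr'A : ∀ y ∈ r', y ∈ Set.range φ := fun y hy => (hq y).1 (hr'q y hy)
    have hr'm₁ : ∀ y ∈ r', y ∈ m₁ := by
      intro y hy
      rw [hin]
      exact List.mem_append_left _ (List.mem_append_right _ hy)
    have hc₁ne : c₁ ≠ [] := by
      rintro rfl
      have h5 : m₁.getLast hm₁ne = (c₀ ++ r').getLast (by simp [hr'ne]) :=
        getLast_eq_of_eq (by rw [hin]; simp) _ _
      rw [List.getLast_append_of_ne_nil _ hr'ne] at h5
      exact hbL hm₁ne ((hq _).2 (h5 ▸ hr'A _ (List.getLast_mem hr'ne)))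
    have hm2 : m = c₀ ++ r' ++ (c₁ ++ r ++ m₂) := by
      rw [hsplit, hin]; simp [List.append_assoc]
    have hbR2' : ∀ h : (c₁ ++ r ++ m₂) ≠ [], (c₁ ++ r ++ m₂).head h ∉ Set.range φ := by
      intro h hmem
      have hh : (c₁ ++ r ++ m₂).head h = c₁.head hc₁ne :=
        (List.head_append_left (by simp [hc₁ne])).trans (List.head_append_left hc₁ne)
      rw [hh] at hmem
      exact hbR2 hc₁ne ((hq _).2 hmem)
    have hbL2' : ∀ h : c₀ ≠ [], c₀.getLast h ∉ Set.range φ :=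
      fun h hin2 => hbL2 h ((hq _).2 hin2)
    obtain ⟨a', b', ha', hb', hH', hL'⟩ :=
      runEnds φ hclosed hzA hl hm2 hchl hr'ne hr'A hbL2' hbR2'
    exact ⟨r', hr'ne, (List.IsInfix.sublist ⟨c₀, c₁, hin.symm⟩).nodup hndm₁, hr'A, hr'm₁, hir',
      a', b', ha', hb', hH', hL'⟩
  -- analysis of a run inside m₂
  have keyM₂ : ∀ x, x ∈ m₂ → x ∈ Set.range φ →
      ∃ (r' : List V) (hne' : r' ≠ []), r'.Nodup ∧ (∀ y ∈ r', y ∈ Set.range φ) ∧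
        (∀ y ∈ r', y ∈ m₂) ∧ x ∈ r' ∧
        ∃ a' b' : Fin 9, a'.1 < 3 ∧ b'.1 < 3 ∧ r'.head hne' = φ a' ∧ r'.getLast hne' = φ b' := by
    intro x hx hxA
    obtain ⟨c₀, r', c₁, hin, hir', hr'q, hbL2, hbR2⟩ := extract q m₂ x hx ((hq _).2 hxA)
    have hm₂ne : m₂ ≠ [] := List.ne_nil_of_mem hx
    have hr'ne : r' ≠ [] := List.ne_nil_of_mem hir'
    have hr'A : ∀ y ∈ r', y ∈ Set.range φ := fun y hy => (hq y).1 (hr'q y hy)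
    have hr'm₂ : ∀ y ∈ r', y ∈ m₂ := by
      intro y hy
      rw [hin]
      exact List.mem_append_left _ (List.mem_append_right _ hy)
    have hc₀ne : c₀ ≠ [] := by
      rintro rfl
      have h5 : m₂.head hm₂ne = (r' ++ c₁).head (by simp [hr'ne]) :=
        head_eq_of_eq (by rw [hin]; rfl) _ _
      have h6 := h5.trans (List.head_append_left hr'ne)
      exact hbR hm₂ne ((hq _).2 (h6 ▸ hr'A _ (List.head_mem hr'ne)))
    have hm2 : m = (m₁ ++ r ++ c₀) ++ r' ++ c₁ := by
      rw [hsplit, hin]; simp [List.append_assoc]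
    have hbL2' : ∀ h : (m₁ ++ r ++ c₀) ≠ [], (m₁ ++ r ++ c₀).getLast h ∉ Set.range φ := by
      intro h hmem
      rw [List.getLast_append_of_ne_nil _ hc₀ne] at hmem
      exact hbL2 hc₀ne ((hq _).2 hmem)
    have hbR2' : ∀ h : c₁ ≠ [], c₁.head h ∉ Set.range φ :=
      fun h hin2 => hbR2 h ((hq _).2 hin2)
    obtain ⟨a', b', ha', hb', hH', hL'⟩ :=
      runEnds φ hclosed hzA hl hm2 hchl hr'ne hr'A hbL2' hbR2'
    exact ⟨r', hr'ne, (List.IsInfix.sublist ⟨c₀, c₁, hin.symm⟩).nodup hndm₂, hr'A, hr'm₂, hir',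
      a', b', ha', hb', hH', hL'⟩
  -- all three simplicial vertices lie in the run r
  have hwr : ∀ i : Fin 9, 6 ≤ i.1 → φ i ∈ r := by
    intro i hi
    by_contra hir
    have him : φ i ∈ (m₁ ++ r) ++ m₂ := by rw [← hsplit]; exact hwm i hi
    have hfour : ∀ (mm : List V), (∀ y ∈ r, y ∈ mm → False) →
        (∃ (r' : List V) (hne' : r' ≠ []), r'.Nodup ∧ (∀ y ∈ r', y ∈ Set.range φ) ∧
          (∀ y ∈ r', y ∈ mm) ∧ φ i ∈ r' ∧
          ∃ a' b' : Fin 9, a'.1 < 3 ∧ b'.1 < 3 ∧ r'.head hne' = φ a' ∧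
            r'.getLast hne' = φ b') → False := by
      rintro mm hdd ⟨r', hne', hnd', hA', hmm', hir', a', b', ha', hb', hH', hL'⟩
      have ka' : φ a' ∈ mm := hmm' _ (by rw [← hH']; exact List.head_mem hne')
      have kb' : φ b' ∈ mm := hmm' _ (by rw [← hL']; exact List.getLast_mem hne')
      have ha'b' : a' ≠ b' := by
        intro h
        exact hsingNe r' hne' hnd' i a' hi ha' hir' hH' (by rw [hL', h])
      have n3 : a ≠ a' := by
        intro h
        exact hdd (φ a) ka (by rw [h]; exact ka')
      have n4 : a ≠ b' := by
        intro h
        exact hdd (φ a) ka (by rw [h]; exact kb')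
      have n5 : b ≠ a' := by
        intro h
        exact hdd (φ b) kb (by rw [h]; exact ka')
      have n6 : b ≠ b' := by
        intro h
        exact hdd (φ b) kb (by rw [h]; exact kb')
      have v1 : a.1 ≠ b.1 := fun h => hab (Fin.ext h)
      have v2 : a'.1 ≠ b'.1 := fun h => ha'b' (Fin.ext h)
      have v3 : a.1 ≠ a'.1 := fun h => n3 (Fin.ext h)
      have v4 : a.1 ≠ b'.1 := fun h => n4 (Fin.ext h)
      have v5 : b.1 ≠ a'.1 := fun h => n5 (Fin.ext h)
      have v6 : b.1 ≠ b'.1 := fun h => n6 (Fin.ext h)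
      omega
    rcases List.mem_append.1 him with him | him
    · rcases List.mem_append.1 him with him | him
      · exact hfour m₁ (fun y hyr hym => hdisj hym hyr) (keyM₁ _ him ⟨i, rfl⟩)
      · exact hir him
    · exact hfour m₂ (fun y hyr hym => hdisj2 (List.mem_append_right _ hyr) hym)
        (keyM₂ _ him ⟨i, rfl⟩)
  -- all three outer vertices lie in the run r
  have houter : ∀ j : Fin 9, j.1 < 3 → φ j ∈ r := by
    intro j hj
    by_contra hjr
    have hja : j ≠ a := fun h => hjr (by rw [h]; exact ka)
    have hjb : j ≠ b := fun h => hjr (by rw [h]; exact kb)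
    exact PH φ hinj hind hndr hchr hrA ha hb hj hab hja hjb hrne hH hL hjr
      (hwr 6 (by decide)) (hwr 7 (by decide)) (hwr 8 (by decide))
  -- m₁ and m₂ contain no vertex of the region
  have h₁A : ∀ v ∈ m₁, v ∉ Set.range φ := by
    intro x hx hxA
    obtain ⟨r', hne', hnd', hA', hmm', hir', a', b', ha', hb', hH', hL'⟩ := keyM₁ x hx hxA
    exact hdisj (hmm' _ (by rw [← hH']; exact List.head_mem hne')) (houter a' ha')
  have h₂A : ∀ v ∈ m₂, v ∉ Set.range φ := by
    intro x hx hxA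
    obtain ⟨r', hne', hnd', hA', hmm', hir', a', b', ha', hb', hH', hL'⟩ := keyM₂ x hx hxA
    exact hdisj2 (List.mem_append_right _ (houter a' ha'))
      (hmm' _ (by rw [← hH']; exact List.head_mem hne'))
  -- build the path
  refine ⟨a, b, ha, hb, hab, (fromChain r hchr hrne).copy hH hL, ?_, ?_, ?_, ?_⟩
  case _ =>
    apply SimpleGraph.Walk.IsPath.mk'
    rw [SimpleGraph.Walk.support_copy, support_fromChain]
    exact hndr
  case _ =>
    intro v
    rw [SimpleGraph.Walk.support_copy, support_fromChain]
    constructor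
    · intro hv
      exact ⟨(hms v (hrA v hv)).2 (hrm.subset hv), hrA v hv⟩
    · rintro ⟨hvC, hvA⟩
      have hvm : v ∈ (m₁ ++ r) ++ m₂ := by rw [← hsplit]; exact (hms v hvA).1 hvC
      rcases List.mem_append.1 hvm with h | h
      · rcases List.mem_append.1 h with h | h
        · exact absurd hvA (h₁A v h)
        · exact h
      · exact absurd hvA (h₂A v h)
  case _ =>
    intro e
    have hPe : ((fromChain r hchr hrne).copy hH hL).edges = pairs r := by
      rw [SimpleGraph.Walk.edges_copy, edges_eq_pairs, support_fromChain]
    rw [hPe, mem_pairs]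
    constructor
    · rintro ⟨x, y, hinf, rfl⟩
      refine ⟨(hedges _).2 ?_, ?_⟩
      · rw [edges_eq_pairs, mem_pairs]
        exact ⟨x, y, hinf.trans hrl, rfl⟩
      · intro v hv
        rcases Sym2.mem_iff.1 hv with rfl | rfl
        · exact hrA v (hinf.subset (by simp))
        · exact hrA v (hinf.subset (by simp))
    · rintro ⟨heC, hvA⟩
      have he' : e ∈ pairs C'.support := by
        rw [← edges_eq_pairs]
        exact (hedges e).1 heC
      rw [mem_pairs] at he'
      obtain ⟨x, y, hinf, rfl⟩ := he'
      have hx : x ∈ Set.range φ := hvA x (by simp)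
      have hy : y ∈ Set.range φ := hvA y (by simp)
      exact ⟨x, y, pair_infix φ hl hsplit hndzm hzA h₁A h₂A hinf hx hy, rfl⟩
  case _ =>
    intro i hi
    rw [SimpleGraph.Walk.support_copy, support_fromChain]
    exact houter i hi
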